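/- Let K = (x_1^4, x_2^5, x_3^6, x_1^2 x_2, x_1^3 x_3) in k[x_1, x_2, x_3]. Then K is not a table ideal: there is no (generalised) table T with K(T) = K. (Indeed, F(K) = ∅: x_1 has different exponents 2 and 3 in the two mixed generators, x_2 does not appear in x_1^3 x_3, and x_3 does not appear in x_1^2 x_2, so no variable can serve as the first constrained variable.) -/
import Mathlib


open MvPolynomial Finset

/-- An `(s,n)`-table: an `(s+1) × n` matrix of non-negative integers `α i j`
(rows `0..s`, columns `1..n`, with `d j := α 0 j`) satisfying the table axioms. -/
def IsTable (s n : ℕ) (α : ℕ → ℕ → ℕ) : Prop :=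
  s < n ∧
  (∀ i j, 1 ≤ i → i ≤ s → j < i → α i j = 0) ∧
  (∀ j, 1 ≤ j → j ≤ n → ∑ i ∈ Finset.Icc 1 s, α i j ≤ α 0 j) ∧
  (∀ k, 1 ≤ k → k ≤ s →
    α 0 k = ∑ i ∈ Finset.Icc 1 (k - 1), α i k + ∑ j ∈ Finset.Icc (k + 1) n, α k j
      + (if k + 1 ≤ s then α (k + 1) (k + 1) else 0))

/-- The generator `m_{i,j}` of `K(T)`, with columns `t` mapped to the variable `v t`:
`m_{i,j} = x_1^{d_1-α_{1,1}} ⋯ x_i^{d_i-α_{1,i}-⋯-α_{i,i}} · x_j^{d_j-α_{1,j}-⋯-α_{i,j}}`. -/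
noncomputable def mGenV (𝕜 : Type*) [Field 𝕜] (v : ℕ → ℕ) (α : ℕ → ℕ → ℕ) (i j : ℕ) :
    MvPolynomial ℕ 𝕜 :=
  (∏ t ∈ Finset.Icc 1 i, X (v t) ^ (α 0 t - ∑ r ∈ Finset.Icc 1 i, α r t)) *
    X (v j) ^ (α 0 j - ∑ r ∈ Finset.Icc 1 i, α r j)

/-- The generator `m_{i,j}` with the default variable order. -/
noncomputable def mGen (𝕜 : Type*) [Field 𝕜] (α : ℕ → ℕ → ℕ) (i j : ℕ) :
    MvPolynomial ℕ 𝕜 :=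
  mGenV 𝕜 id α i j

/-- The ideal `K(T)` associated to an `(s,n)`-table, generated by all `m_{i,j}`,
`0 ≤ i ≤ s`, `i < j ≤ n`, in `𝕜[x_1,…,x_n]` (viewed inside `MvPolynomial ℕ 𝕜`). -/
noncomputable def KIdeal (𝕜 : Type*) [Field 𝕜] (s n : ℕ) (α : ℕ → ℕ → ℕ) :
    Ideal (MvPolynomial ℕ 𝕜) :=
  Ideal.span {m | ∃ i j, i ≤ s ∧ i < j ∧ j ≤ n ∧ m = mGen 𝕜 α i j}

/-- A table is in normal form: nonzero diagonal entries, no unconstrained almost-zero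
columns, and strict column inequalities. -/
def NormalForm (s n : ℕ) (α : ℕ → ℕ → ℕ) : Prop :=
  (∀ i, 1 ≤ i → i ≤ s → α i i ≠ 0) ∧
  (1 ≤ s → ∀ j, s + 1 ≤ j → j ≤ n → ∃ i, 1 ≤ i ∧ i ≤ s ∧ α i j ≠ 0) ∧
  (∀ j, 1 ≤ j → j ≤ n → ∑ i ∈ Finset.Icc 1 s, α i j < α 0 j)

/-- A generalised table: a disjoint union of tables on disjoint sets of variables. -/
structure GenTable where
  num : ℕ
  s : Fin num → ℕ
  n : Fin num → ℕ
  α : Fin num → ℕ → ℕ → ℕ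
  var : Fin num → ℕ → ℕ
  var_inj : ∀ c c' j j', 1 ≤ j → j ≤ n c → 1 ≤ j' → j' ≤ n c' →
    var c j = var c' j' → c = c' ∧ j = j'
  table : ∀ c, IsTable (s c) (n c) (α c)

/-- The ideal associated to a generalised table: the sum of the ideals of the
individual tables. -/
noncomputable def gKIdeal (𝕜 : Type*) [Field 𝕜] (T : GenTable) :
    Ideal (MvPolynomial ℕ 𝕜) :=
  Ideal.span {m | ∃ c i j, i ≤ T.s c ∧ i < j ∧ j ≤ T.n c ∧
    m = mGenV 𝕜 (T.var c) (T.α c) i j}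

/-- A generalised table is in normal form iff each individual table is. -/
def gNormal (T : GenTable) : Prop := ∀ c, NormalForm (T.s c) (T.n c) (T.α c)

/-- Exponent vector of `mGenV`. -/
noncomputable def Eexp (v : ℕ → ℕ) (β : ℕ → ℕ → ℕ) (i j : ℕ) : ℕ →₀ ℕ :=
  (∑ t ∈ Finset.Icc 1 i, Finsupp.single (v t) (β 0 t - ∑ r ∈ Finset.Icc 1 i, β r t))
    + Finsupp.single (v j) (β 0 j - ∑ r ∈ Finset.Icc 1 i, β r j)

lemma prodXpow (𝕜 : Type*) [Field 𝕜] (s : Finset ℕ) (g f : ℕ → ℕ) :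
    (∏ t ∈ s, (X (g t) : MvPolynomial ℕ 𝕜) ^ f t)
      = monomial (∑ t ∈ s, Finsupp.single (g t) (f t)) 1 := by
  induction s using Finset.cons_induction with
  | empty => simp
  | cons a s ha ih =>
      rw [Finset.prod_cons, Finset.sum_cons, ih, X_pow_eq_monomial, monomial_mul, one_mul]

lemma mGenV_eq (𝕜 : Type*) [Field 𝕜] (v : ℕ → ℕ) (β : ℕ → ℕ → ℕ) (i j : ℕ) :
    mGenV 𝕜 v β i j = monomial (Eexp v β i j) 1 := by
  rw [mGenV, prodXpow, X_pow_eq_monomial, monomial_mul, one_mul, Eexp]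

lemma Eexp_apply (v : ℕ → ℕ) (β : ℕ → ℕ → ℕ) (i j w : ℕ) :
    Eexp v β i j w =
      (∑ t ∈ Finset.Icc 1 i, if v t = w then β 0 t - ∑ r ∈ Finset.Icc 1 i, β r t else 0)
        + (if v j = w then β 0 j - ∑ r ∈ Finset.Icc 1 i, β r j else 0) := by
  rw [Eexp, Finsupp.add_apply, Finsupp.finset_sum_apply]
  congr 1
  · exact Finset.sum_congr rfl fun t _ => Finsupp.single_apply
  · exact Finsupp.single_apply

lemma Eexp_apply_eq_zero (v : ℕ → ℕ) (β : ℕ → ℕ → ℕ) (i j w : ℕ)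
    (h1 : ∀ t, 1 ≤ t → t ≤ i → v t ≠ w) (h2 : v j ≠ w) :
    Eexp v β i j w = 0 := by
  rw [Eexp_apply, if_neg h2, add_zero]
  refine Finset.sum_eq_zero fun t ht => ?_
  rw [Finset.mem_Icc] at ht
  exact if_neg (h1 t ht.1 ht.2)

/-- Exponent vectors of the five generators of `K`. -/
noncomputable def f1 : ℕ →₀ ℕ := Finsupp.single 1 4
noncomputable def f2 : ℕ →₀ ℕ := Finsupp.single 2 5
noncomputable def f3 : ℕ →₀ ℕ := Finsupp.single 3 6
noncomputable def f4 : ℕ →₀ ℕ := Finsupp.single 1 2 + Finsupp.single 2 1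
noncomputable def f5 : ℕ →₀ ℕ := Finsupp.single 1 3 + Finsupp.single 3 1







/-- `K = (x_1^4, x_2^5, x_3^6, x_1^2 x_2, x_1^3 x_3)` is not a table
ideal: no generalised table `T` satisfies `K(T) = K`. -/
theorem stmt14 (𝕜 : Type*) [Field 𝕜] :
    ¬ ∃ T : GenTable, gKIdeal 𝕜 T =
      Ideal.span ({X 1 ^ 4, X 2 ^ 5, X 3 ^ 6, X 1 ^ 2 * X 2, X 1 ^ 3 * X 3} :
        Set (MvPolynomial ℕ 𝕜)) := by
  classical
  rintro ⟨T, hT⟩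
  -- rewrite K's generating set as an image of monomials
  have hm2 : ∀ x e y : ℕ, (X x ^ e * X y : MvPolynomial ℕ 𝕜)
      = monomial (Finsupp.single x e + Finsupp.single y 1) 1 := by
    intro x e y
    rw [← pow_one (X y : MvPolynomial ℕ 𝕜), X_pow_eq_monomial, X_pow_eq_monomial,
      monomial_mul, one_mul]
  have hKset : ({X 1 ^ 4, X 2 ^ 5, X 3 ^ 6, X 1 ^ 2 * X 2, X 1 ^ 3 * X 3} :
      Set (MvPolynomial ℕ 𝕜)) = (fun σ => monomial σ (1 : 𝕜)) '' {f1, f2, f3, f4, f5} := by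
    simp only [Set.image_insert_eq, Set.image_singleton, f1, f2, f3, f4, f5]
    rw [X_pow_eq_monomial, X_pow_eq_monomial, X_pow_eq_monomial, hm2, hm2]
  have hGset : {m | ∃ c i j, i ≤ T.s c ∧ i < j ∧ j ≤ T.n c ∧
        m = mGenV 𝕜 (T.var c) (T.α c) i j}
      = (fun σ => monomial σ (1 : 𝕜)) ''
        {σ | ∃ c i j, i ≤ T.s c ∧ i < j ∧ j ≤ T.n c ∧ σ = Eexp (T.var c) (T.α c) i j} := by
    ext m
    constructor
    · rintro ⟨c, i, j, h1, h2, h3, rfl⟩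
      exact ⟨_, ⟨c, i, j, h1, h2, h3, rfl⟩, (mGenV_eq 𝕜 _ _ i j).symm⟩
    · rintro ⟨σ, ⟨c, i, j, h1, h2, h3, rfl⟩, rfl⟩
      exact ⟨c, i, j, h1, h2, h3, (mGenV_eq 𝕜 _ _ i j).symm⟩
  rw [gKIdeal, hGset, hKset] at hT
  -- main extraction: a minimal generator of K must be an exponent vector of the table
  have main : ∀ f : ℕ →₀ ℕ, f ∈ ({f1, f2, f3, f4, f5} : Set (ℕ →₀ ℕ)) →
      (∀ τ ∈ ({f1, f2, f3, f4, f5} : Set (ℕ →₀ ℕ)), τ ≤ f → τ = f) →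
      ∃ c i j, i ≤ T.s c ∧ i < j ∧ j ≤ T.n c ∧ Eexp (T.var c) (T.α c) i j = f := by
    intro f hf hmin
    have h1 : monomial f (1 : 𝕜) ∈ Ideal.span ((fun σ => monomial σ (1 : 𝕜)) ''
        {σ | ∃ c i j, i ≤ T.s c ∧ i < j ∧ j ≤ T.n c ∧ σ = Eexp (T.var c) (T.α c) i j}) := by
      rw [hT]; exact Ideal.subset_span ⟨f, hf, rfl⟩
    rw [mem_ideal_span_monomial_image] at h1
    obtain ⟨σ, hσ, hle⟩ := h1 f (by
      rw [support_monomial, if_neg (one_ne_zero' 𝕜)]; exact Finset.mem_singleton_self _)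
    obtain ⟨c, i, j, hc1, hc2, hc3, rfl⟩ := hσ
    have h2 : monomial (Eexp (T.var c) (T.α c) i j) (1 : 𝕜) ∈
        Ideal.span ((fun σ => monomial σ (1 : 𝕜)) '' ({f1, f2, f3, f4, f5} : Set (ℕ →₀ ℕ))) := by
      rw [← hT]; exact Ideal.subset_span ⟨_, ⟨c, i, j, hc1, hc2, hc3, rfl⟩, rfl⟩
    rw [mem_ideal_span_monomial_image] at h2
    obtain ⟨τ, hτ, hle2⟩ := h2 _ (by
      rw [support_monomial, if_neg (one_ne_zero' 𝕜)]; exact Finset.mem_singleton_self _)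
    have hτf := hmin τ hτ (hle2.trans hle)
    exact ⟨c, i, j, hc1, hc2, hc3, le_antisymm hle (hτf ▸ hle2)⟩
  -- apply to f4
  have hmin4 : ∀ τ ∈ ({f1, f2, f3, f4, f5} : Set (ℕ →₀ ℕ)), τ ≤ f4 → τ = f4 := by
    rintro τ hτ hle
    simp only [Set.mem_insert_iff, Set.mem_singleton_iff] at hτ
    rcases hτ with rfl | rfl | rfl | rfl | rfl
    · exact absurd (Finsupp.le_def.mp hle 1) (by
        simp [f1, f4, Finsupp.single_apply])
    · exact absurd (Finsupp.le_def.mp hle 2) (by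
        simp [f2, f4, Finsupp.single_apply])
    · exact absurd (Finsupp.le_def.mp hle 3) (by
        simp [f3, f4, Finsupp.single_apply])
    · rfl
    · exact absurd (Finsupp.le_def.mp hle 1) (by
        simp [f5, f4, Finsupp.single_apply])
  have hmin5 : ∀ τ ∈ ({f1, f2, f3, f4, f5} : Set (ℕ →₀ ℕ)), τ ≤ f5 → τ = f5 := by
    rintro τ hτ hle
    simp only [Set.mem_insert_iff, Set.mem_singleton_iff] at hτ
    rcases hτ with rfl | rfl | rfl | rfl | rfl
    · exact absurd (Finsupp.le_def.mp hle 1) (by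
        simp [f1, f5, Finsupp.single_apply])
    · exact absurd (Finsupp.le_def.mp hle 2) (by
        simp [f2, f5, Finsupp.single_apply])
    · exact absurd (Finsupp.le_def.mp hle 3) (by
        simp [f3, f5, Finsupp.single_apply])
    · exact absurd (Finsupp.le_def.mp hle 2) (by
        simp [f4, f5, Finsupp.single_apply])
    · rfl
  obtain ⟨c4, i4, j4, his4, hij4, hjn4, hE4⟩ := main f4 (by simp) hmin4
  obtain ⟨c5, i5, j5, his5, hij5, hjn5, hE5⟩ := main f5 (by simp) hmin5
  -- coefficient values of f4 and f5
  have hf4_1 : f4 1 = 2 := by simp [f4, Finsupp.single_apply]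
  have hf4_2 : f4 2 = 1 := by simp [f4, Finsupp.single_apply]
  have hf4_3 : f4 3 = 0 := by simp [f4, Finsupp.single_apply]
  have hf5_1 : f5 1 = 3 := by simp [f5, Finsupp.single_apply]
  have hf5_2 : f5 2 = 0 := by simp [f5, Finsupp.single_apply]
  have hf5_3 : f5 3 = 1 := by simp [f5, Finsupp.single_apply]
  -- find the indices carrying variables 1, 2, 3
  have hfind : ∀ (c : Fin T.num) i j (x : ℕ) (g : ℕ →₀ ℕ),
      Eexp (T.var c) (T.α c) i j = g → g x ≠ 0 →
      ∃ t, ((1 ≤ t ∧ t ≤ i) ∨ t = j) ∧ T.var c t = x := by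
    intro c i j x g hE hx
    by_contra hcon
    push_neg at hcon
    have h0 : Eexp (T.var c) (T.α c) i j x = 0 :=
      Eexp_apply_eq_zero _ _ i j x (fun t h1 h2 => hcon t (Or.inl ⟨h1, h2⟩))
        (hcon j (Or.inr rfl))
    rw [hE] at h0
    exact hx h0
  obtain ⟨a4, ha4, hva4⟩ := hfind c4 i4 j4 1 f4 hE4 (by omega)
  obtain ⟨a5, ha5, hva5⟩ := hfind c5 i5 j5 1 f5 hE5 (by omega)
  obtain ⟨b, hb, hvb⟩ := hfind c4 i4 j4 2 f4 hE4 (by omega)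
  obtain ⟨ee, hee, hvee⟩ := hfind c5 i5 j5 3 f5 hE5 (by omega)
  -- bounds for involved indices
  have hbnd4 : ∀ t, ((1 ≤ t ∧ t ≤ i4) ∨ t = j4) → 1 ≤ t ∧ t ≤ T.n c4 := by
    rintro t (⟨h1, h2⟩ | rfl)
    · exact ⟨h1, by omega⟩
    · exact ⟨by omega, hjn4⟩
  have hbnd5 : ∀ t, ((1 ≤ t ∧ t ≤ i5) ∨ t = j5) → 1 ≤ t ∧ t ≤ T.n c5 := by
    rintro t (⟨h1, h2⟩ | rfl)
    · exact ⟨h1, by omega⟩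
    · exact ⟨by omega, hjn5⟩
  -- unify components: variable 1 occurs in both
  obtain ⟨hcc, haa⟩ := T.var_inj c4 c5 a4 a5 (hbnd4 a4 ha4).1 (hbnd4 a4 ha4).2
    (hbnd5 a5 ha5).1 (hbnd5 a5 ha5).2 (by rw [hva4, hva5])
  subst hcc
  subst haa
  set c := c4 with hc
  set v := T.var c with hv
  set β := T.α c with hβ
  obtain ⟨hsn, hzero, hlecol, hrow⟩ := T.table c
  have hvinj : ∀ t t', 1 ≤ t → t ≤ T.n c → 1 ≤ t' → t' ≤ T.n c → v t = v t' → t = t' :=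
    fun t t' h1 h2 h3 h4 h5 => (T.var_inj c c t t' h1 h2 h3 h4 h5).2
  -- stability of column sums
  have hstab : ∀ i t, 1 ≤ t → t ≤ i → i ≤ T.s c →
      (∑ r ∈ Finset.Icc 1 i, β r t) = ∑ r ∈ Finset.Icc 1 t, β r t := by
    intro i t h1 hti his
    refine (Finset.sum_subset (Finset.Icc_subset_Icc_right hti) ?_).symm
    intro r hr hr'
    rw [Finset.mem_Icc] at hr
    rw [Finset.mem_Icc] at hr'
    exact hzero r t hr.1 (hr.2.trans his) (by omega)
  -- coefficient of a prefix variable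
  have hCoefPrefix : ∀ i j t0, i ≤ T.s c → i < j → j ≤ T.n c → 1 ≤ t0 → t0 ≤ i →
      Eexp v β i j (v t0) = β 0 t0 - ∑ r ∈ Finset.Icc 1 t0, β r t0 := by
    intro i j t0 his hij hjn h1 h2
    rw [Eexp_apply]
    rw [Finset.sum_eq_single_of_mem t0 (Finset.mem_Icc.mpr ⟨h1, h2⟩)]
    · rw [if_pos rfl, if_neg, add_zero, hstab i t0 h1 h2 his]
      intro hvj
      have := hvinj j t0 (by omega) hjn h1 (by omega) hvj
      omega
    · intro t ht hne
      rw [Finset.mem_Icc] at ht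
      refine if_neg fun hveq => hne ?_
      exact hvinj t t0 ht.1 (by omega) h1 (by omega) hveq
  -- coefficient of the `j`-variable
  have hCoefJ : ∀ i j, i ≤ T.s c → i < j → j ≤ T.n c →
      Eexp v β i j (v j) = β 0 j - ∑ r ∈ Finset.Icc 1 i, β r j := by
    intro i j his hij hjn
    rw [Eexp_apply, if_pos rfl]
    rw [Finset.sum_eq_zero, zero_add]
    intro t ht
    rw [Finset.mem_Icc] at ht
    refine if_neg fun hveq => ?_
    have := hvinj t j ht.1 (by omega) (by omega) hjn hveq
    omega
  -- monotonicity of column sums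
  have hmono : ∀ i i' t, i ≤ i' →
      (∑ r ∈ Finset.Icc 1 i, β r t) ≤ ∑ r ∈ Finset.Icc 1 i', β r t :=
    fun i i' t h => Finset.sum_le_sum_of_subset (Finset.Icc_subset_Icc_right h)
  -- case analysis on the position of `a` (the index of variable 1)
  rcases ha4 with ⟨ha1, ha2⟩ | rfl
  · -- a in the prefix of M4 : C a = 2
    have hCa2 : β 0 a4 - ∑ r ∈ Finset.Icc 1 a4, β r a4 = 2 := by
      have h := hCoefPrefix i4 j4 a4 his4 hij4 hjn4 ha1 ha2
      rw [hva4, hE4, hf4_1] at h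
      omega
    rcases ha5 with ⟨ha1', ha2'⟩ | rfl
    · -- a also in prefix of M5 : C a = 3, contradiction
      have hCa3 : β 0 a4 - ∑ r ∈ Finset.Icc 1 a4, β r a4 = 3 := by
        have h := hCoefPrefix i5 j5 a4 his5 hij5 hjn5 ha1' ha2'
        rw [hva5, hE5, hf5_1] at h
        omega
      omega
    · -- a = j5 : then ee is in the prefix of M5, with C ee = 1, and ee ≤ i4
      have heene : ee ≠ a4 := by
        intro h; rw [h, hva5] at hvee; omega
      rcases hee with ⟨he1, he2⟩ | rfl
      · have hCe1 : β 0 ee - ∑ r ∈ Finset.Icc 1 ee, β r ee = 1 := by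
          have h := hCoefPrefix i5 a4 ee his5 hij5 hjn5 he1 he2
          rw [hvee, hE5, hf5_3] at h
          omega
        have h := hCoefPrefix i4 j4 ee his4 hij4 hjn4 he1 (by omega)
        rw [hvee, hE4, hf4_3] at h
        omega
      · exact heene rfl
  · -- a = j4 : then b is in the prefix of M4, with C b = 1
    have hbne : b ≠ a4 := by
      intro h; rw [h, hva4] at hvb; omega
    rcases hb with ⟨hb1, hb2⟩ | rfl
    · have hCb1 : β 0 b - ∑ r ∈ Finset.Icc 1 b, β r b = 1 := by
        have h := hCoefPrefix i4 a4 b his4 hij4 hjn4 hb1 hb2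
        rw [hvb, hE4, hf4_2] at h
        omega
      rcases ha5 with ⟨ha1', ha2'⟩ | rfl
      · -- a in prefix of M5 : then b ≤ i4 < a ≤ i5, so variable 2 appears in M5
        have h := hCoefPrefix i5 j5 b his5 hij5 hjn5 hb1 (by omega)
        rw [hvb, hE5, hf5_2] at h
        omega
      · -- a = j4 = j5
        have hA4 : β 0 a4 - ∑ r ∈ Finset.Icc 1 i4, β r a4 = 2 := by
          have h := hCoefJ i4 a4 his4 hij4 hjn4
          rw [hva4, hE4, hf4_1] at h
          omega
        have hA5 : β 0 a4 - ∑ r ∈ Finset.Icc 1 i5, β r a4 = 3 := by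
          have h := hCoefJ i5 a4 his5 hij5 hjn5
          rw [hva4, hE5, hf5_1] at h
          omega
        have hi54 : i5 < i4 := by
          by_contra hcon
          have := hmono i4 i5 a4 (by omega)
          omega
        have heene : ee ≠ a4 := by
          intro h; rw [h, hva4] at hvee; omega
        rcases hee with ⟨he1, he2⟩ | rfl
        · have hCe1 : β 0 ee - ∑ r ∈ Finset.Icc 1 ee, β r ee = 1 := by
            have h := hCoefPrefix i5 a4 ee his5 hij5 hjn5 he1 he2
            rw [hvee, hE5, hf5_3] at h
            omega
          have h := hCoefPrefix i4 a4 ee his4 hij4 hjn4 he1 (by omega)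
          rw [hvee, hE4, hf4_3] at h
          omega
        · exact heene rfl
    · exact hbne rfl
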